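/- Let k > 0 and 0 ≤ δ < k, and let e : ℝ → ℝ be differentiable. If there exists T ∈ ℝ such that |e'(t) + k·sat(e(t))| ≤ δ for all t ≥ T, then limsup_{t→∞} |e(t)| ≤ δ/k. (Ultimate-boundedness lemma used in Step 3 of the moving-target analysis to convert the bound on z(t) = e'(t) + (c2/c1)·sat(e(t)) into a bound on the circumnavigation error.) -/

import Mathlib

open Filter

/-- Saturation function: `sat z = z` if `|z| < 1`, `sign z` otherwise. -/
noncomputable def sat (z : ℝ) : ℝ := if |z| < 1 then z else Real.sign z

/-- If the derivative is at most `-m` on `[a,b]`, the function decays linearly. -/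
lemma decay_aux (e : ℝ → ℝ) (he : Differentiable ℝ e) (m a b : ℝ) (hab : a ≤ b)
    (hd : ∀ t, a ≤ t → t ≤ b → deriv e t ≤ -m) :
    e b ≤ e a - m * (b - a) := by
  set g : ℝ → ℝ := fun t => e t + m * t with hg
  have hgd : Differentiable ℝ g := he.add ((differentiable_id.const_mul m))
  have hganti : AntitoneOn g (Set.Icc a b) := by
    apply antitoneOn_of_deriv_nonpos (convex_Icc a b) hgd.continuous.continuousOn
      hgd.differentiableOn
    intro x hx
    rw [interior_Icc] at hx
    have : deriv g x = deriv e x + m := by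
      have h := ((he x).hasDerivAt.add (((hasDerivAt_id x).const_mul m))).deriv
      rw [mul_one] at h; exact h
    rw [this]
    have := hd x hx.1.le hx.2.le
    linarith
  have := hganti (Set.left_mem_Icc.2 hab) (Set.right_mem_Icc.2 hab) hab
  simp only [hg] at this
  linarith

/-- No upward crossing: if the derivative is nonpositive whenever `e ≥ c` on `[a,b]`,
and `e a ≤ c`, then `e b ≤ c`. -/
lemma no_cross_aux (e : ℝ → ℝ) (he : Differentiable ℝ e) (c a b : ℝ) (hab : a ≤ b)
    (hd : ∀ t, a ≤ t → t ≤ b → c ≤ e t → deriv e t ≤ 0) (ha : e a ≤ c) :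
    e b ≤ c := by
  by_contra hb
  push_neg at hb
  set S : Set ℝ := {t ∈ Set.Icc a b | e t ≤ c} with hS
  have hScpt : IsCompact S := by
    apply (isCompact_Icc (a := a) (b := b)).of_isClosed_subset
    · exact (isClosed_Icc).inter (isClosed_le he.continuous continuous_const)
    · exact fun t ht => ht.1
  have hSne : S.Nonempty := ⟨a, ⟨le_refl a, hab⟩, ha⟩
  set s := sSup S with hs
  have hsmem : s ∈ S := hScpt.sSup_mem hSne
  have hsb : s ≤ b := hsmem.1.2
  have hsa : a ≤ s := hsmem.1.1
  have hsc : e s ≤ c := hsmem.2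
  have hgt : ∀ t, s < t → t ≤ b → c < e t := by
    intro t hst htb
    by_contra h
    push_neg at h
    have : t ∈ S := ⟨⟨hsa.trans hst.le, htb⟩, h⟩
    exact absurd (le_csSup hScpt.bddAbove this) (not_le.2 hst)
  have hanti : AntitoneOn e (Set.Icc s b) := by
    apply antitoneOn_of_deriv_nonpos (convex_Icc s b) he.continuous.continuousOn
      he.differentiableOn
    intro x hx
    rw [interior_Icc] at hx
    exact hd x (hsa.trans hx.1.le) hx.2.le (hgt x hx.1 hx.2.le).le
  have := hanti (Set.left_mem_Icc.2 hsb) (Set.right_mem_Icc.2 hsb) hsb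
  linarith

/-- One-sided ultimate bound. -/
lemma onesided_aux (e : ℝ → ℝ) (he : Differentiable ℝ e) (T c m : ℝ) (hm : 0 < m)
    (hd : ∀ t, T ≤ t → c ≤ e t → deriv e t ≤ -m) :
    ∀ᶠ t in atTop, e t ≤ c := by
  -- first, find t₀ ≥ T with e t₀ ≤ c
  have hstep : ∃ t₀, T ≤ t₀ ∧ e t₀ ≤ c := by
    by_contra h
    push_neg at h
    set b := T + (e T - c) / m + 1 with hb
    have h1 : c < e T := h T le_rfl
    have h2 : 0 ≤ (e T - c) / m := div_nonneg (by linarith) hm.le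
    have hTb : T ≤ b := by rw [hb]; linarith
    have hdec := decay_aux e he m T b hTb (fun t ht htb => hd t ht (h t ht).le)
    have hbT : m * (b - T) = (e T - c) + m := by
      field_simp [hb]
      have hx : m * ((e T - c) / m) = e T - c := by field_simp [hm.ne']
      rw [hb]; linear_combination hx
    have : e b ≤ c - m := by rw [hbT] at hdec; linarith
    have := h b hTb
    linarith
  obtain ⟨t₀, ht₀T, ht₀⟩ := hstep
  filter_upwards [eventually_ge_atTop t₀] with t ht
  exact no_cross_aux e he c t₀ t ht
    (fun u hu hub hcu => (hd u (ht₀T.trans hu) hcu).trans (by linarith)) ht₀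

/-- Ultimate-boundedness lemma: if eventually `|e' + k·sat(e)| ≤ δ` with
`0 ≤ δ < k`, then `limsup |e| ≤ δ/k`. -/
theorem ultimate_boundedness
    (k δ : ℝ) (hk : 0 < k) (hδ0 : 0 ≤ δ) (hδk : δ < k)
    (e : ℝ → ℝ) (he : Differentiable ℝ e)
    (hbound : ∃ T : ℝ, ∀ t ≥ T, |deriv e t + k * sat (e t)| ≤ δ) :
    Filter.limsup (fun t => |e t|) Filter.atTop ≤ δ / k := by
  obtain ⟨T, hT⟩ := hbound
  have hdk1 : δ / k < 1 := (div_lt_one hk).2 hδk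
  have hdk0 : 0 ≤ δ / k := div_nonneg hδ0 hk.le
  -- key: for any c with δ/k < c < 1, eventually |e t| ≤ c
  have key : ∀ c, δ / k < c → c < 1 → ∀ᶠ t in atTop, |e t| ≤ c := by
    intro c hc1 hc2
    have hc0 : 0 < c := lt_of_le_of_lt hdk0 hc1
    have hm : 0 < k * c - δ := by
      have := (div_lt_iff₀ hk).1 hc1
      nlinarith
    -- sat lower bound
    have hsat : ∀ x : ℝ, c ≤ x → c ≤ sat x := by
      intro x hx
      unfold sat
      split_ifs with h
      · exact hx
      · rw [Real.sign_of_pos (lt_of_lt_of_le hc0 hx)]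
        exact hc2.le
    -- derivative bounds
    have hup : ∀ t, T ≤ t → c ≤ e t → deriv e t ≤ -(k * c - δ) := by
      intro t ht hct
      have h1 := (abs_le.1 (hT t ht)).2
      have h2 : c ≤ sat (e t) := hsat _ hct
      nlinarith
    have hdn : ∀ t, T ≤ t → c ≤ (-e) t → deriv (-e) t ≤ -(k * c - δ) := by
      intro t ht hct
      have h1 := (abs_le.1 (hT t ht)).1
      have h2 : c ≤ sat (-e t) := hsat _ hct
      have hsatneg : sat (-e t) = -sat (e t) := by
        unfold sat
        rw [abs_neg, Real.sign_neg]
        split_ifs <;> ring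
      have hneg : deriv (-e) t = -deriv e t := by
        simp only [Pi.neg_def]; exact deriv.neg
      rw [hneg]
      simp only [Pi.neg_apply] at hct
      rw [hsatneg] at h2
      nlinarith
    have h1 := onesided_aux e he T c _ hm hup
    have h2 := onesided_aux (-e) he.neg T c _ hm hdn
    filter_upwards [h1, h2] with t ht1 ht2
    simp only [Pi.neg_apply] at ht2
    exact abs_le.2 ⟨by linarith, ht1⟩
  -- conclude
  apply le_of_forall_gt_imp_ge_of_dense
  intro a ha
  set c := (δ / k + min a 1) / 2 with hcdef
  have hca : δ / k < min a 1 := lt_min ha hdk1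
  have hc1 : δ / k < c := by
    simp only [hcdef]; linarith
  have hc2 : c < 1 := by
    have : min a 1 ≤ 1 := min_le_right a 1
    simp only [hcdef]; linarith
  have hcle : c ≤ a := by
    have : min a 1 ≤ a := min_le_left a 1
    simp only [hcdef]; linarith
  have hev := key c hc1 hc2
  have hev' : ∀ᶠ t in atTop, |e t| ≤ a := hev.mono fun t ht => ht.trans hcle
  exact limsup_le_of_le (isCoboundedUnder_le_of_le atTop (fun i => abs_nonneg (e i))) hev'
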